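/- For all n ≥ 2, the number of permutations of [n] avoiding both 213 and 312 equals 2^{n-1}. -/

import Mathlib

/-- `π` contains the pattern `p` (given as the sequence of its values). -/
def ContainsPat {n k : ℕ} (π : Equiv.Perm (Fin n)) (p : Fin k → ℕ) : Prop :=
  ∃ f : Fin k → Fin n, StrictMono f ∧ ∀ a b : Fin k, p a < p b ↔ π (f a) < π (f b)



/-- valley-free -/
def VF {m : ℕ} (π : Equiv.Perm (Fin m)) : Prop :=
  ∀ i j k : Fin m, i < j → j < k → π j < π i → π j < π k → False

lemma avoid_iff_VF {m : ℕ} (π : Equiv.Perm (Fin m)) :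
    (¬ ContainsPat π ![2, 1, 3] ∧ ¬ ContainsPat π ![3, 1, 2]) ↔ VF π := by
  constructor
  · rintro ⟨h1, h2⟩ i j k hij hjk hji hjk'
    have hik : i < k := hij.trans hjk
    have hne : π i ≠ π k := fun h => (π.injective h ▸ hik).false
    have hmono : StrictMono ![i, j, k] := by
      intro a b hab
      fin_cases a <;> fin_cases b <;> simp_all <;> omega
    rcases lt_or_gt_of_ne hne with h | h
    · exact h1 ⟨![i, j, k], hmono, by
        intro a b
        fin_cases a <;> fin_cases b <;>
          simp [Matrix.cons_val_zero, Matrix.cons_val_one] <;> omega⟩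
    · exact h2 ⟨![i, j, k], hmono, by
        intro a b
        fin_cases a <;> fin_cases b <;>
          simp [Matrix.cons_val_zero, Matrix.cons_val_one] <;> omega⟩
  · intro h
    constructor
    · rintro ⟨f, hf, hp⟩
      have h01 : f 0 < f 1 := hf (by decide)
      have h12 : f 1 < f 2 := hf (by decide)
      have a1 : π (f 1) < π (f 0) := (hp 1 0).mp (by norm_num)
      have a2 : π (f 1) < π (f 2) := (hp 1 2).mp (by decide)
      exact h _ _ _ h01 h12 a1 a2
    · rintro ⟨f, hf, hp⟩
      have h01 : f 0 < f 1 := hf (by decide)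
      have h12 : f 1 < f 2 := hf (by decide)
      have a1 : π (f 1) < π (f 0) := (hp 1 0).mp (by norm_num)
      have a2 : π (f 1) < π (f 2) := (hp 1 2).mp (by decide)
      exact h _ _ _ h01 h12 a1 a2


def pre0 {n : ℕ} (σ : Equiv.Perm (Fin n)) : Equiv.Perm (Fin (n + 1)) :=
  Equiv.Perm.decomposeFin.symm (0, σ)

lemma pre0_zero {n : ℕ} (σ : Equiv.Perm (Fin n)) : pre0 σ 0 = 0 :=
  Equiv.Perm.decomposeFin_symm_apply_zero 0 σ

lemma pre0_succ {n : ℕ} (σ : Equiv.Perm (Fin n)) (i : Fin n) :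
    pre0 σ i.succ = (σ i).succ := by
  simp [pre0, Equiv.Perm.decomposeFin_symm_apply_succ]

def rv {n : ℕ} (π : Equiv.Perm (Fin n)) : Equiv.Perm (Fin n) :=
  Fin.revPerm.trans π

lemma rv_apply {n : ℕ} (π : Equiv.Perm (Fin n)) (i : Fin n) : rv π i = π i.rev := rfl

lemma rv_rv {n : ℕ} (π : Equiv.Perm (Fin n)) : rv (rv π) = π := by
  ext i; simp [rv_apply]

lemma rv_inj {n : ℕ} : Function.Injective (rv (n := n)) := by
  intro a b h
  rw [← rv_rv a, h, rv_rv]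

lemma VF_rv {n : ℕ} (π : Equiv.Perm (Fin n)) (h : VF π) : VF (rv π) := by
  intro i j k hij hjk h1 h2
  exact h k.rev j.rev i.rev (Fin.rev_lt_rev.mpr hjk) (Fin.rev_lt_rev.mpr hij) h2 h1

lemma VF_pre0_iff {n : ℕ} (σ : Equiv.Perm (Fin n)) : VF (pre0 σ) ↔ VF σ := by
  constructor
  · intro h i j k hij hjk h1 h2
    refine h i.succ j.succ k.succ ?_ ?_ ?_ ?_ <;>
      simp [pre0_succ, Fin.succ_lt_succ_iff, hij, hjk, h1, h2]
  · intro h i j k hij hjk h1 h2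
    have hi0 : i ≠ 0 := by
      rintro rfl
      rw [pre0_zero] at h1
      exact (Fin.not_lt_zero _) h1
    have hj0 : j ≠ 0 := fun hj => hi0 (le_antisymm (hj ▸ hij.le) (Fin.zero_le _))
    have hk0 : k ≠ 0 := fun hk => hj0 (le_antisymm (hk ▸ hjk.le) (Fin.zero_le _))
    obtain ⟨i', rfl⟩ := Fin.exists_succ_eq.mpr hi0
    obtain ⟨j', rfl⟩ := Fin.exists_succ_eq.mpr hj0
    obtain ⟨k', rfl⟩ := Fin.exists_succ_eq.mpr hk0
    simp only [pre0_succ] at h1 h2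
    exact h i' j' k' (Fin.succ_lt_succ_iff.mp hij) (Fin.succ_lt_succ_iff.mp hjk)
      (Fin.succ_lt_succ_iff.mp h1) (Fin.succ_lt_succ_iff.mp h2)

/-- the inverse-direction map for the recursion -/
def stepMap {n : ℕ} (x : Bool × {σ : Equiv.Perm (Fin (n + 1)) // VF σ}) :
    {π : Equiv.Perm (Fin (n + 2)) // VF π} :=
  if x.1 then ⟨pre0 x.2.1, (VF_pre0_iff _).mpr x.2.2⟩
  else ⟨rv (pre0 x.2.1), VF_rv _ ((VF_pre0_iff _).mpr x.2.2)⟩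

lemma pre0_zero_val {n : ℕ} (σ : Equiv.Perm (Fin (n+1))) : pre0 σ (Fin.last (n+1)) ≠ 0 := by
  have : (Fin.last (n+1)) = (Fin.last n).succ := rfl
  rw [this, pre0_succ]
  exact Fin.succ_ne_zero _

lemma stepMap_bij {n : ℕ} : Function.Bijective (stepMap (n := n)) := by
  constructor
  · rintro ⟨b1, σ1, h1⟩ ⟨b2, σ2, h2⟩ h
    have hv : ∀ (b : Bool) (σ : {σ : Equiv.Perm (Fin (n + 1)) // VF σ}),
        ((stepMap (b, σ)).1 0 = 0) = (b = true) := by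
      rintro b ⟨σ, hσ⟩
      rcases b with _ | _ <;> simp [stepMap, pre0_zero]
      · rw [rv_apply]
        have : (0 : Fin (n+2)).rev = Fin.last (n+1) := by simp
        rw [this]
        exact pre0_zero_val σ
    have hb : b1 = b2 := by
      have e1 := hv b1 ⟨σ1, h1⟩
      have e2 := hv b2 ⟨σ2, h2⟩
      rw [h] at e1
      rw [e2] at e1
      rcases b1 <;> rcases b2 <;> simp_all
    subst hb
    have hσ : σ1 = σ2 := by
      have hval : (stepMap (b1, ⟨σ1, h1⟩)).1 = (stepMap (b1, ⟨σ2, h2⟩)).1 := by rw [h]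
      have hpre : pre0 σ1 = pre0 σ2 := by
        rcases b1 <;> simp [stepMap] at hval
        · exact rv_inj hval
        · exact hval
      have := congrArg Equiv.Perm.decomposeFin hpre
      simpa [pre0] using congrArg Prod.snd this
    simp [hσ]
  · rintro ⟨π, hπ⟩
    -- where is 0?
    have hcases : π 0 = 0 ∨ π (Fin.last (n + 1)) = 0 := by
      by_contra hc
      push_neg at hc
      obtain ⟨h0, hl⟩ := hc
      set j := π.symm 0 with hj
      have hπj : π j = 0 := π.apply_symm_apply 0
      have hj0 : j ≠ 0 := fun h => h0 (h ▸ hπj)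
      have hjl : j ≠ Fin.last (n + 1) := fun h => hl (h ▸ hπj)
      have v1 : π j < π 0 := hπj ▸ Fin.pos_iff_ne_zero.mpr h0
      have v2 : π j < π (Fin.last (n + 1)) := hπj ▸ Fin.pos_iff_ne_zero.mpr hl
      exact hπ 0 j (Fin.last (n + 1)) (Fin.pos_iff_ne_zero.mpr hj0)
        (lt_of_le_of_ne (Fin.le_last j) hjl) v1 v2
    have key : ∀ (ρ : Equiv.Perm (Fin (n + 2))), VF ρ → ρ 0 = 0 →
        ∃ σ : {σ : Equiv.Perm (Fin (n + 1)) // VF σ}, pre0 σ.1 = ρ := by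
      intro ρ hρ h0
      set σ := (Equiv.Perm.decomposeFin ρ).2 with hσ
      have hd : Equiv.Perm.decomposeFin.symm (Equiv.Perm.decomposeFin ρ) = ρ :=
        Equiv.Perm.decomposeFin.symm_apply_apply ρ
      have hfst : (Equiv.Perm.decomposeFin ρ).1 = 0 := by
        have := Equiv.Perm.decomposeFin_symm_apply_zero (Equiv.Perm.decomposeFin ρ).1
          (Equiv.Perm.decomposeFin ρ).2
        rw [hd] at this
        rw [← this, h0]
      have hpre : pre0 σ = ρ := by
        rw [pre0, hσ, ← hfst, hd]
      exact ⟨⟨σ, (VF_pre0_iff σ).mp (hpre ▸ hρ)⟩, hpre⟩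
    rcases hcases with h0 | hl
    · obtain ⟨σ, hσ⟩ := key π hπ h0
      exact ⟨(true, σ), Subtype.ext (by simp [stepMap, hσ])⟩
    · obtain ⟨σ, hσ⟩ := key (rv π) (VF_rv _ hπ) (by
        rw [rv_apply]
        have : (0 : Fin (n+2)).rev = Fin.last (n+1) := by simp
        rw [this, hl])
      refine ⟨(false, σ), Subtype.ext ?_⟩
      simp only [stepMap, if_neg (Bool.false_ne_true)]
      rw [hσ, rv_rv]

lemma card_aux : ∀ m : ℕ, Nat.card {σ : Equiv.Perm (Fin (m + 1)) // VF σ} = 2 ^ m := by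
  intro m
  induction m with
  | zero =>
    have hall : ∀ σ : Equiv.Perm (Fin 1), VF σ := by
      intro σ i j k hij hjk _ _
      have := i.2; have := j.2; have := k.2
      omega
    rw [Nat.card_congr (Equiv.subtypeUnivEquiv hall)]
    simp [Nat.card_eq_fintype_card]
  | succ m ih =>
    have h := Nat.card_eq_of_bijective _ (stepMap_bij (n := m))
    rw [← h, Nat.card_prod, ih, Nat.card_eq_fintype_card]
    simp [pow_succ, Nat.mul_comm]

/-- For `n ≥ 2`, the number of permutations of `[n]` avoiding both `213` and `312`
equals `2^{n-1}`. -/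
theorem stmt_10 (n : ℕ) (hn : 2 ≤ n) :
    Nat.card {π : Equiv.Perm (Fin n) //
      ¬ ContainsPat π ![2, 1, 3] ∧ ¬ ContainsPat π ![3, 1, 2]} = 2 ^ (n - 1) := by
  obtain ⟨m, rfl⟩ : ∃ m, n = m + 1 := ⟨n - 1, by omega⟩
  rw [Nat.card_congr (Equiv.subtypeEquivRight fun π => avoid_iff_VF π)]
  rw [card_aux m]
  simp
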